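/- Let p be a prime and let λ be a partition of d with at most n parts. Then λ satisfies the Doty digit condition (for p) if and only if every partition μ of d with at most n parts having the same carry pattern as λ (i.e. c_i(μ) = c_i(λ) for all i ≥ 1) satisfies μ ⊴ λ. (Combinatorial form of Lemma 4.4(a): by Doty's theorem this is exactly the criterion for L(λ) to be a composition factor of the symmetric power H^0(d).) -/

import Mathlib

/-- `l` is a partition of `d` with at most `n` parts: a weakly decreasing tuple
(indexed from 0, vanishing from index `n` on) of nonnegative integers summing to `d`. -/
def IsPartition (n d : ℕ) (l : ℕ → ℕ) : Prop :=
  Antitone l ∧ (∀ i, n ≤ i → l i = 0) ∧ ∑ i ∈ Finset.range n, l i = d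

/-- Doty digit condition: if the `j`-th base-`p` digit of the `i`-th part is not `p - 1`,
then the `j`-th digit of every later part is `0`. -/
def DotyCondition (p : ℕ) (l : ℕ → ℕ) : Prop :=
  ∀ i j i', i < i' → (l i / p ^ j) % p ≠ p - 1 → (l i' / p ^ j) % p = 0

/-- `carry p n β i` is `c_{i+1}(β)`, the amount carried past the `p^(i+1)`-column when
`β 0, …, β (n-1)` are added in base `p`. -/
def carry (p n : ℕ) (β : ℕ → ℕ) (i : ℕ) : ℕ :=
  (∑ j ∈ Finset.range n, β j % p ^ (i + 1)) / p ^ (i + 1)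

/-- `Dominates l m` : `l` dominates `m`, i.e. `m ⊴ l`. -/
def Dominates (l m : ℕ → ℕ) : Prop :=
  ∀ k, ∑ i ∈ Finset.range k, m i ≤ ∑ i ∈ Finset.range k, l i

namespace DotyAux

lemma sum_div (p J : ℕ) (hp : 2 ≤ p) (c : ℕ → ℕ) (hc : ∀ j, c j < p) :
    ∀ t, (∑ j ∈ Finset.range J, p ^ j * c j) / p ^ t
      = ∑ j ∈ Finset.range (J - t), p ^ j * c (j + t) := by
  intro t
  induction t with
  | zero => simp
  | succ t ih =>
    have h1 : (∑ j ∈ Finset.range J, p ^ j * c j) / p ^ (t + 1)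
        = (∑ j ∈ Finset.range (J - t), p ^ j * c (j + t)) / p := by
      rw [pow_succ, ← Nat.div_div_eq_div_mul, ih]
    rw [h1]
    rcases Nat.eq_zero_or_pos (J - t) with h | h
    · simp [h, show J - (t+1) = 0 by omega]
    · obtain ⟨K, hK⟩ : ∃ K, J - t = K + 1 := ⟨J - t - 1, by omega⟩
      rw [hK, Finset.sum_range_succ']
      have : ∑ j ∈ Finset.range K, p ^ (j + 1) * c (j + 1 + t) + p ^ 0 * c (0 + t)
          = p * (∑ j ∈ Finset.range K, p ^ j * c (j + (t + 1))) + c t := by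
        rw [Finset.mul_sum]
        congr 1
        · apply Finset.sum_congr rfl
          intro j _
          rw [pow_succ]
          have : j + 1 + t = j + (t + 1) := by omega
          rw [this]; ring
        · simp
      rw [this, Nat.mul_add_div (by omega), Nat.div_eq_of_lt (hc t), add_zero,
        show J - (t+1) = K by omega]

lemma sum_digit (p J : ℕ) (hp : 2 ≤ p) (c : ℕ → ℕ) (hc : ∀ j, c j < p)
    (t : ℕ) (ht : t < J) :
    (∑ j ∈ Finset.range J, p ^ j * c j) / p ^ t % p = c t := by
  rw [sum_div p J hp c hc t]
  obtain ⟨K, hK⟩ : ∃ K, J - t = K + 1 := ⟨J - t - 1, by omega⟩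
  rw [hK, Finset.sum_range_succ']
  have : ∑ j ∈ Finset.range K, p ^ (j + 1) * c (j + 1 + t) + p ^ 0 * c (0 + t)
      = p * (∑ j ∈ Finset.range K, p ^ j * c (j + 1 + t)) + c t := by
    rw [Finset.mul_sum]
    congr 1
    · exact Finset.sum_congr rfl fun j _ => by rw [pow_succ]; ring
    · simp
  rw [this, Nat.mul_add_mod, Nat.mod_eq_of_lt (hc t)]

lemma sum_lt (p J : ℕ) (hp : 2 ≤ p) (c : ℕ → ℕ) (hc : ∀ j, c j < p) :
    (∑ j ∈ Finset.range J, p ^ j * c j) < p ^ J := by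
  induction J with
  | zero => simp
  | succ J ih =>
    rw [Finset.sum_range_succ, pow_succ]
    have h1 : p ^ J * c J ≤ p ^ J * (p - 1) := Nat.mul_le_mul_left _ (by have := hc J; omega)
    have h2 : p ^ J * (p - 1) + p ^ J = p ^ J * p := by
      rw [← Nat.mul_succ]; congr 1; omega
    omega


theorem U_eq (p n d : ℕ) (hp : 2 ≤ p) (lam mu : ℕ → ℕ)
    (hlsum : ∑ i ∈ Finset.range n, lam i = d)
    (hmsum : ∑ i ∈ Finset.range n, mu i = d)
    (hc : ∀ m, (∑ i ∈ Finset.range n, mu i % p ^ (m + 1)) / p ^ (m + 1)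
      = (∑ i ∈ Finset.range n, lam i % p ^ (m + 1)) / p ^ (m + 1)) :
    ∀ j, ∑ i ∈ Finset.range n, mu i / p ^ j = ∑ i ∈ Finset.range n, lam i / p ^ j := by
  have key : ∀ (β : ℕ → ℕ), (∑ i ∈ Finset.range n, β i = d) → ∀ j,
      (∑ i ∈ Finset.range n, β i % p ^ j) + p ^ j * (∑ i ∈ Finset.range n, β i / p ^ j) = d := by
    intro β hβ j
    rw [Finset.mul_sum, ← Finset.sum_add_distrib, ← hβ]
    exact Finset.sum_congr rfl fun i _ => Nat.mod_add_div _ _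
  intro j
  match j with
  | 0 => simp [hlsum, hmsum]
  | (m+1) =>
    have hkm := key mu hmsum (m+1)
    have hkl := key lam hlsum (m+1)
    have hq : 0 < p ^ (m+1) := pow_pos (by omega) _
    have h1 : d / p ^ (m+1) = (∑ i ∈ Finset.range n, mu i % p ^ (m + 1)) / p ^ (m+1)
        + (∑ i ∈ Finset.range n, mu i / p ^ (m+1)) := by
      rw [← hkm, Nat.add_mul_div_left _ _ hq]
    have h2 : d / p ^ (m+1) = (∑ i ∈ Finset.range n, lam i % p ^ (m + 1)) / p ^ (m+1)
        + (∑ i ∈ Finset.range n, lam i / p ^ (m+1)) := by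
      rw [← hkl, Nat.add_mul_div_left _ _ hq]
    have hc' := hc m
    omega

theorem colsum_eq (p n d : ℕ) (hp : 2 ≤ p) (lam mu : ℕ → ℕ)
    (hlsum : ∑ i ∈ Finset.range n, lam i = d)
    (hmsum : ∑ i ∈ Finset.range n, mu i = d)
    (hc : ∀ m, (∑ i ∈ Finset.range n, mu i % p ^ (m + 1)) / p ^ (m + 1)
      = (∑ i ∈ Finset.range n, lam i % p ^ (m + 1)) / p ^ (m + 1)) :
    ∀ j, ∑ i ∈ Finset.range n, mu i / p ^ j % p = ∑ i ∈ Finset.range n, lam i / p ^ j % p := by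
  intro j
  have key : ∀ (β : ℕ → ℕ),
      (∑ i ∈ Finset.range n, β i / p ^ j % p) + p * (∑ i ∈ Finset.range n, β i / p ^ (j+1)) =
        ∑ i ∈ Finset.range n, β i / p ^ j := by
    intro β
    rw [Finset.mul_sum, ← Finset.sum_add_distrib]
    refine Finset.sum_congr rfl fun i _ => ?_
    rw [pow_succ, ← Nat.div_div_eq_div_mul]
    exact Nat.mod_add_div _ _
  have h1 := key mu
  have h2 := key lam
  have hU1 := U_eq p n d hp lam mu hlsum hmsum hc j
  have hU2 := U_eq p n d hp lam mu hlsum hmsum hc (j+1)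
  rw [hU2] at h1
  omega

theorem eq_sum_digits (p : ℕ) (hp : 2 ≤ p) :
    ∀ J x, x < p ^ J → x = ∑ j ∈ Finset.range J, p ^ j * (x / p ^ j % p) := by
  intro J
  induction J with
  | zero =>
    intro x hx
    simp only [pow_zero, Nat.lt_one_iff] at hx
    simp [hx]
  | succ J ih =>
    intro x hx
    have hxp : x / p < p ^ J := by
      rw [Nat.div_lt_iff_lt_mul (by omega)]
      calc x < p ^ (J + 1) := hx
        _ = p ^ J * p := pow_succ p J
    have hIH := ih (x / p) hxp
    rw [Finset.sum_range_succ']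
    have hmain : ∑ j ∈ Finset.range J, p ^ (j + 1) * (x / p ^ (j + 1) % p) = p * (x / p) := by
      have : ∀ j, p ^ (j + 1) * (x / p ^ (j + 1) % p) = p * (p ^ j * (x / p / p ^ j % p)) := by
        intro j
        rw [Nat.div_div_eq_div_mul, ← pow_succ']
        ring
      rw [Finset.sum_congr rfl fun j _ => this j, ← Finset.mul_sum, ← hIH]
    rw [hmain]
    simp only [pow_zero, one_mul, Nat.div_one]
    have := Nat.mod_add_div x p
    omega

theorem forward (p n d : ℕ) (hp : 2 ≤ p) (lam mu : ℕ → ℕ)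
    (hdoty : DotyCondition p lam) (hlam : IsPartition n d lam) (hmu : IsPartition n d mu)
    (hc : ∀ i, carry p n mu i = carry p n lam i) : Dominates lam mu := by
  obtain ⟨hlmono, hlzero, hlsum⟩ := hlam
  obtain ⟨hmmono, hmzero, hmsum⟩ := hmu
  intro k
  rcases le_or_gt n k with hnk | hkn
  · -- both prefix sums equal d
    have h1 : ∑ i ∈ Finset.range k, mu i = d := by
      rw [← Finset.sum_subset (Finset.range_subset_range.mpr hnk)
        (fun x _ hx => hmzero x (by simpa using hx))]
      exact hmsum
    have h2 : ∑ i ∈ Finset.range k, lam i = d := by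
      rw [← Finset.sum_subset (Finset.range_subset_range.mpr hnk)
        (fun x _ hx => hlzero x (by simpa using hx))]
      exact hlsum
    omega
  · -- k < n
    set J := d + 1 with hJdef
    have hdlt : d < p ^ J := lt_of_le_of_lt (by omega) (Nat.lt_pow_self (n := J) (by omega))
    have hlle : ∀ i, lam i ≤ d := by
      intro i
      rcases lt_or_ge i n with h | h
      · exact hlsum ▸ Finset.single_le_sum (fun _ _ => Nat.zero_le _) (Finset.mem_range.mpr h)
      · rw [hlzero i h]; exact Nat.zero_le _
    have hmle : ∀ i, mu i ≤ d := by
      intro i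
      rcases lt_or_ge i n with h | h
      · exact hmsum ▸ Finset.single_le_sum (fun _ _ => Nat.zero_le _) (Finset.mem_range.mpr h)
      · rw [hmzero i h]; exact Nat.zero_le _
    have hexp : ∀ (β : ℕ → ℕ), (∀ i, β i ≤ d) → ∑ i ∈ Finset.range k, β i
        = ∑ j ∈ Finset.range J, ∑ i ∈ Finset.range k, p ^ j * (β i / p ^ j % p) := by
      intro β hβ
      rw [← Finset.sum_comm]
      exact Finset.sum_congr rfl fun i _ =>
        eq_sum_digits p hp J (β i) (lt_of_le_of_lt (hβ i) hdlt)
    rw [hexp lam hlle, hexp mu hmle]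
    refine Finset.sum_le_sum fun j _ => ?_
    rw [← Finset.mul_sum, ← Finset.mul_sum]
    refine Nat.mul_le_mul_left _ ?_
    -- column j : ∑_{i<k} digit_j(mu) ≤ ∑_{i<k} digit_j(lam)
    by_cases hall : ∀ i < k, lam i / p ^ j % p = p - 1
    · -- lam prefix is k*(p-1), max possible
      calc ∑ i ∈ Finset.range k, mu i / p ^ j % p
          ≤ ∑ i ∈ Finset.range k, (p - 1) :=
            Finset.sum_le_sum fun i _ => by
              have := Nat.mod_lt (mu i / p ^ j) (show 0 < p by omega); omega
        _ = ∑ i ∈ Finset.range k, lam i / p ^ j % p :=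
            Finset.sum_congr rfl fun i hi => (hall i (Finset.mem_range.mp hi)).symm
    · push_neg at hall
      classical
      have hex : ∃ i, i < k ∧ lam i / p ^ j % p ≠ p - 1 := hall
      set i0 := Nat.find hex with hi0def
      obtain ⟨hi0k, hi0d⟩ := Nat.find_spec hex
      have hzero : ∀ l, i0 < l → lam l / p ^ j % p = 0 := fun l hl => hdoty i0 j l hl hi0d
      have hcs := colsum_eq p n d hp lam mu hlsum hmsum (fun m => hc m) j
      calc ∑ i ∈ Finset.range k, mu i / p ^ j % p
          ≤ ∑ i ∈ Finset.range n, mu i / p ^ j % p :=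
            Finset.sum_le_sum_of_subset (Finset.range_subset_range.mpr (le_of_lt hkn))
        _ = ∑ i ∈ Finset.range n, lam i / p ^ j % p := hcs
        _ = ∑ i ∈ Finset.range k, lam i / p ^ j % p := by
            refine (Finset.sum_subset (Finset.range_subset_range.mpr (le_of_lt hkn)) ?_).symm
            intro x _ hx
            simp only [Finset.mem_range, not_lt] at hx
            exact hzero x (lt_of_lt_of_le hi0k hx)

theorem backward (p n d : ℕ) (hp : 2 ≤ p) (lam : ℕ → ℕ) (hlam : IsPartition n d lam)
    (hnd : ¬ DotyCondition p lam) :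
    ∃ mu, IsPartition n d mu ∧ (∀ m, carry p n mu m = carry p n lam m) ∧ ¬ Dominates lam mu := by
  obtain ⟨hlmono, hlzero, hlsum⟩ := hlam
  unfold DotyCondition at hnd
  push_neg at hnd
  obtain ⟨i, j, i', hii', hdi, hdi'⟩ := hnd
  set q := p - 1 with hqdef
  have hq1 : 1 ≤ q := by omega
  set J := d + 1 with hJdef
  have hdlt : d < p ^ J := lt_of_le_of_lt (by omega) (Nat.lt_pow_self (n := J) (by omega))
  have hlle : ∀ i2, lam i2 ≤ d := by
    intro i2
    rcases lt_or_ge i2 n with h | h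
    · exact hlsum ▸ Finset.single_le_sum (fun _ _ => Nat.zero_le _) (Finset.mem_range.mpr h)
    · rw [hlzero i2 h]; exact Nat.zero_le _
  have hllt : ∀ i2, lam i2 < p ^ J := fun i2 => lt_of_le_of_lt (hlle i2) hdlt
  set A : ℕ → ℕ := fun t => ∑ i2 ∈ Finset.range n, lam i2 / p ^ t % p with hA
  set ent : ℕ → ℕ → ℕ := fun t i2 => min (A t) ((i2 + 1) * q) - min (A t) (i2 * q) with hent
  set mu : ℕ → ℕ := fun i2 => ∑ t ∈ Finset.range J, p ^ t * ent t i2 with hmu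
  have hdig_lt : ∀ x t, x / p ^ t % p < p := fun x t => Nat.mod_lt _ (by omega)
  have hent_lt : ∀ t i2, ent t i2 < p := by
    intro t i2
    simp only [hent]
    have h1 : (i2 + 1) * q = i2 * q + q := by ring
    omega
  have hAle : ∀ t, A t ≤ n * q := by
    intro t
    simp only [hA]
    calc ∑ i2 ∈ Finset.range n, lam i2 / p ^ t % p ≤ ∑ _i2 ∈ Finset.range n, q :=
          Finset.sum_le_sum fun i2 _ => by have := hdig_lt (lam i2) t; omega
      _ = n * q := by simp [Finset.sum_const, Finset.card_range]
  have hcol : ∀ t k, ∑ i2 ∈ Finset.range k, ent t i2 = min (A t) (k * q) := by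
    intro t k
    induction k with
    | zero => simp
    | succ k ih =>
      rw [Finset.sum_range_succ, ih]
      simp only [hent]
      have h1 : (k + 1) * q = k * q + q := by ring
      omega
  have hmudig : ∀ i2 t, t < J → mu i2 / p ^ t % p = ent t i2 := fun i2 t ht =>
    sum_digit p J hp (fun t => ent t i2) (fun t => hent_lt t i2) t ht
  have hmudiv : ∀ i2 m, mu i2 / p ^ m = ∑ s ∈ Finset.range (J - m), p ^ s * ent (s + m) i2 :=
    fun i2 m => sum_div p J hp (fun t => ent t i2) (fun t => hent_lt t i2) m
  have hlamdig : ∀ i2, lam i2 = ∑ t ∈ Finset.range J, p ^ t * (lam i2 / p ^ t % p) :=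
    fun i2 => eq_sum_digits p hp J _ (hllt i2)
  have hlamdiv : ∀ i2 m, lam i2 / p ^ m
      = ∑ s ∈ Finset.range (J - m), p ^ s * (lam i2 / p ^ (s + m) % p) := by
    intro i2 m
    conv_lhs => rw [hlamdig i2]
    exact sum_div p J hp (fun t => lam i2 / p ^ t % p) (fun t => hdig_lt (lam i2) t) m
  have hmupre : ∀ k, ∑ i2 ∈ Finset.range k, mu i2
      = ∑ t ∈ Finset.range J, p ^ t * min (A t) (k * q) := by
    intro k
    simp only [hmu]
    rw [Finset.sum_comm]
    exact Finset.sum_congr rfl fun t _ => by rw [← Finset.mul_sum, hcol t k]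
  have hmuzero : ∀ i2, n ≤ i2 → mu i2 = 0 := by
    intro i2 h
    simp only [hmu]
    refine Finset.sum_eq_zero fun t _ => ?_
    have h1 : A t ≤ i2 * q := le_trans (hAle t) (Nat.mul_le_mul_right q h)
    have h2 : i2 * q ≤ (i2 + 1) * q := Nat.mul_le_mul_right q (by omega)
    have h3 : ent t i2 = 0 := by simp only [hent]; omega
    simp [h3]
  have hAsum : ∑ t ∈ Finset.range J, p ^ t * A t = d := by
    simp only [hA]
    rw [← hlsum]
    calc ∑ t ∈ Finset.range J, p ^ t * ∑ i2 ∈ Finset.range n, lam i2 / p ^ t % p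
        = ∑ t ∈ Finset.range J, ∑ i2 ∈ Finset.range n, p ^ t * (lam i2 / p ^ t % p) :=
          Finset.sum_congr rfl fun t _ => Finset.mul_sum _ _ _
      _ = ∑ i2 ∈ Finset.range n, ∑ t ∈ Finset.range J, p ^ t * (lam i2 / p ^ t % p) :=
          Finset.sum_comm
      _ = ∑ i2 ∈ Finset.range n, lam i2 :=
          Finset.sum_congr rfl fun i2 _ => (hlamdig i2).symm
  have hmusum : ∑ i2 ∈ Finset.range n, mu i2 = d := by
    rw [hmupre n, ← hAsum]
    refine Finset.sum_congr rfl fun t _ => ?_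
    have := hAle t
    congr 1
    omega
  have hmuanti : Antitone mu := by
    apply antitone_nat_of_succ_le
    intro i2
    simp only [hmu]
    refine Finset.sum_le_sum fun t _ => Nat.mul_le_mul_left _ ?_
    simp only [hent]
    have h1 : (i2 + 1) * q = i2 * q + q := by ring
    have h2 : (i2 + 1 + 1) * q = i2 * q + 2 * q := by ring
    omega
  have hkey : ∀ (β : ℕ → ℕ), ∀ m : ℕ,
      (∑ i2 ∈ Finset.range n, β i2 % p ^ m) + p ^ m * (∑ i2 ∈ Finset.range n, β i2 / p ^ m)
        = ∑ i2 ∈ Finset.range n, β i2 := by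
    intro β m
    rw [Finset.mul_sum, ← Finset.sum_add_distrib]
    exact Finset.sum_congr rfl fun i2 _ => Nat.mod_add_div _ _
  have hT : ∀ m, ∑ i2 ∈ Finset.range n, mu i2 / p ^ (m + 1)
      = ∑ i2 ∈ Finset.range n, lam i2 / p ^ (m + 1) := by
    intro m
    have e1 : ∑ i2 ∈ Finset.range n, mu i2 / p ^ (m + 1)
        = ∑ s ∈ Finset.range (J - (m + 1)), p ^ s * min (A (s + (m + 1))) (n * q) := by
      rw [Finset.sum_congr rfl fun i2 _ => hmudiv i2 (m + 1), Finset.sum_comm]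
      exact Finset.sum_congr rfl fun s _ => by rw [← Finset.mul_sum, hcol]
    have e2 : ∑ i2 ∈ Finset.range n, lam i2 / p ^ (m + 1)
        = ∑ s ∈ Finset.range (J - (m + 1)), p ^ s * A (s + (m + 1)) := by
      rw [Finset.sum_congr rfl fun i2 _ => hlamdiv i2 (m + 1), Finset.sum_comm]
      refine Finset.sum_congr rfl fun s _ => ?_
      rw [← Finset.mul_sum]
    rw [e1, e2]
    refine Finset.sum_congr rfl fun s _ => ?_
    have := hAle (s + (m + 1))
    congr 1
    omega
  have hcarry : ∀ m, carry p n mu m = carry p n lam m := by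
    intro m
    unfold carry
    have k1 := hkey mu (m + 1)
    have k2 := hkey lam (m + 1)
    rw [hmusum] at k1
    rw [hlsum] at k2
    have hTm := hT m
    rw [hTm] at k1
    have : (∑ i2 ∈ Finset.range n, mu i2 % p ^ (m + 1))
        = ∑ i2 ∈ Finset.range n, lam i2 % p ^ (m + 1) := by omega
    rw [this]
  -- non-domination
  have hj : j < J := by
    have h1 : p ^ j ≤ lam i' := by
      by_contra h
      push_neg at h
      rw [Nat.div_eq_of_lt h] at hdi'
      simp at hdi'
    have h2 : p ^ j < p ^ J := lt_of_le_of_lt (le_trans h1 (hlle i')) hdlt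
    exact (Nat.pow_lt_pow_iff_right (by omega)).mp h2
  have hi'n : i' < n := by
    by_contra h
    push_neg at h
    rw [hlzero i' h] at hdi'
    simp at hdi'
  set k := i + 1 with hkdef
  have hkn : k ≤ n := by omega
  have hlampre : ∑ i2 ∈ Finset.range k, lam i2
      = ∑ t ∈ Finset.range J, p ^ t * ∑ i2 ∈ Finset.range k, (lam i2 / p ^ t % p) := by
    calc ∑ i2 ∈ Finset.range k, lam i2
        = ∑ i2 ∈ Finset.range k, ∑ t ∈ Finset.range J, p ^ t * (lam i2 / p ^ t % p) :=
          Finset.sum_congr rfl fun i2 _ => hlamdig i2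
      _ = ∑ t ∈ Finset.range J, ∑ i2 ∈ Finset.range k, p ^ t * (lam i2 / p ^ t % p) :=
          Finset.sum_comm
      _ = ∑ t ∈ Finset.range J, p ^ t * ∑ i2 ∈ Finset.range k, (lam i2 / p ^ t % p) :=
          Finset.sum_congr rfl fun t _ => (Finset.mul_sum _ _ _).symm
  have hstrict : ∑ i2 ∈ Finset.range k, lam i2 < ∑ i2 ∈ Finset.range k, mu i2 := by
    rw [hlampre, hmupre k]
    refine Finset.sum_lt_sum ?_ ⟨j, Finset.mem_range.mpr hj, ?_⟩
    · intro t _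
      refine Nat.mul_le_mul_left _ (le_min ?_ ?_)
      · calc ∑ i2 ∈ Finset.range k, lam i2 / p ^ t % p
            ≤ ∑ i2 ∈ Finset.range n, lam i2 / p ^ t % p :=
              Finset.sum_le_sum_of_subset (Finset.range_subset_range.mpr hkn)
          _ = A t := by simp only [hA]
      · calc ∑ i2 ∈ Finset.range k, lam i2 / p ^ t % p ≤ ∑ _i2 ∈ Finset.range k, q :=
              Finset.sum_le_sum fun i2 _ => by have := hdig_lt (lam i2) t; omega
          _ = k * q := by simp [Finset.sum_const, Finset.card_range]
    · have hpref1 : ∑ i2 ∈ Finset.range k, lam i2 / p ^ j % p < k * q := by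
        rw [hkdef, Finset.sum_range_succ]
        have h1 : lam i / p ^ j % p ≤ q - 1 := by
          have := hdig_lt (lam i) j
          omega
        have h2 : ∑ i2 ∈ Finset.range i, lam i2 / p ^ j % p ≤ i * q := by
          calc ∑ i2 ∈ Finset.range i, lam i2 / p ^ j % p ≤ ∑ _i2 ∈ Finset.range i, q :=
                Finset.sum_le_sum fun i2 _ => by have := hdig_lt (lam i2) j; omega
            _ = i * q := by simp [Finset.sum_const, Finset.card_range]
        have h3 : (i + 1) * q = i * q + q := by ring
        omega
      have hpref2 : ∑ i2 ∈ Finset.range k, lam i2 / p ^ j % p < A j := by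
        have hsplit : ∑ i2 ∈ Finset.range k, lam i2 / p ^ j % p
            + ∑ i2 ∈ Finset.Ico k n, lam i2 / p ^ j % p
            = ∑ i2 ∈ Finset.range n, lam i2 / p ^ j % p := by
          simp only [Finset.range_eq_Ico]
          exact Finset.sum_Ico_consecutive _ (Nat.zero_le k) hkn
        have hi'mem : i' ∈ Finset.Ico k n := Finset.mem_Ico.mpr ⟨by omega, hi'n⟩
        have hge : lam i' / p ^ j % p ≤ ∑ i2 ∈ Finset.Ico k n, lam i2 / p ^ j % p :=
          Finset.single_le_sum (f := fun i2 => lam i2 / p ^ j % p)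
            (fun _ _ => Nat.zero_le _) hi'mem
        have hA' : A j = ∑ i2 ∈ Finset.range n, lam i2 / p ^ j % p := by
          simp only [hA]
        omega
      have hlt : ∑ i2 ∈ Finset.range k, lam i2 / p ^ j % p < min (A j) (k * q) :=
        lt_min hpref2 hpref1
      exact mul_lt_mul_of_pos_left hlt (pow_pos (by omega) j)
  refine ⟨mu, ⟨hmuanti, hmuzero, hmusum⟩, hcarry, ?_⟩
  intro hdom
  exact absurd (hdom k) (not_le.mpr hstrict)


end DotyAux

theorem doty_condition_iff_max_for_carry_pattern
    (p n d : ℕ) (hp : p.Prime) (lam : ℕ → ℕ) (hlam : IsPartition n d lam) :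
    DotyCondition p lam ↔
      ∀ mu : ℕ → ℕ, IsPartition n d mu →
        (∀ i, carry p n mu i = carry p n lam i) → Dominates lam mu := by
  constructor
  · intro hdoty mu hmu hc
    exact DotyAux.forward p n d hp.two_le lam mu hdoty hlam hmu hc
  · intro hmax
    by_contra hnd
    obtain ⟨mu, hmu, hc, hdom⟩ := DotyAux.backward p n d hp.two_le lam hlam hnd
    exact hdom (hmax mu hmu hc)
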